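/- arXiv:0902.1327 — 4 statements merged into one kernel-verified Lean document; each statement's English description precedes it below -/
import Mathlib

section
/- Let f be an isolate-indifferent graph parameter, let F₀ be a graph on vertex set [n-1], and consider the sum over all graphs F on [n] whose restriction to [n-1] equals F₀ of f†(F). Then this sum equals f†(F₀). Equivalently, ∑_{F: F∖{n}=F₀} f†(F) = f†(F₀). -/
open scoped Classical

/-- The Möbius transform of a graph parameter. -/
noncomputable def mobiusT (f : ∀ n, SimpleGraph (Fin n) → ℝ) {n : ℕ} (F : SimpleGraph (Fin n)) : ℝ :=
  ∑ F' : SimpleGraph (Fin n),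
    if F ≤ F' then
      (-1 : ℝ) ^ (Nat.card (F'.edgeSet \ F.edgeSet : Set (Sym2 (Fin n)))) * f n F'
    else 0

/-- Invariance under isomorphisms (on the same number of vertices). -/
def IsoInvariant (f : ∀ n, SimpleGraph (Fin n) → ℝ) : Prop :=
  ∀ (n : ℕ) (G G' : SimpleGraph (Fin n)), Nonempty (G ≃g G') → f n G = f n G'

/-- Isolate-indifferent: invariant under isomorphism and under adding an isolated vertex. -/
def IsolateIndifferent (f : ∀ n, SimpleGraph (Fin n) → ℝ) : Prop :=
  IsoInvariant f ∧ ∀ (n : ℕ) (G : SimpleGraph (Fin n)),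
    f (n + 1) (G.map Fin.castSuccEmb) = f n G

/-- Normalized: `f(K₀) = f(K₁) = 1`. -/
def Normalized (f : ∀ n, SimpleGraph (Fin n) → ℝ) : Prop :=
  f 0 ⊥ = 1 ∧ f 1 ⊥ = 1


section Aux
variable {n : ℕ}


private lemma csl {x : Fin n} : Fin.castSucc x ≠ Fin.last n := (Fin.castSucc_lt_last x).ne

noncomputable def gext (G : SimpleGraph (Fin n)) (S : Finset (Fin n)) : SimpleGraph (Fin (n + 1)) where
  Adj a b := (∃ x y, G.Adj x y ∧ x.castSucc = a ∧ y.castSucc = b) ∨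
             (∃ x ∈ S, x.castSucc = a ∧ b = Fin.last n) ∨
             (∃ x ∈ S, x.castSucc = b ∧ a = Fin.last n)
  symm := by
    constructor
    rintro a b (⟨x, y, h, rfl, rfl⟩ | ⟨x, hx, rfl, rfl⟩ | ⟨x, hx, rfl, rfl⟩)
    · exact Or.inl ⟨y, x, h.symm, rfl, rfl⟩
    · exact Or.inr (Or.inr ⟨x, hx, rfl, rfl⟩)
    · exact Or.inr (Or.inl ⟨x, hx, rfl, rfl⟩)
  loopless := by
    constructor
    rintro a (⟨x, y, h, rfl, he⟩ | ⟨x, hx, rfl, he⟩ | ⟨x, hx, rfl, he⟩)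
    · exact h.ne (Fin.castSucc_injective n he.symm)
    · exact csl he
    · exact csl he

lemma gext_adj_cast {G : SimpleGraph (Fin n)} {S : Finset (Fin n)} {x y : Fin n} :
    (gext G S).Adj x.castSucc y.castSucc ↔ G.Adj x y := by
  constructor
  · rintro (⟨a, b, h, ha, hb⟩ | ⟨a, ha, h1, h2⟩ | ⟨a, ha, h1, h2⟩)
    · rwa [Fin.castSucc_injective n ha, Fin.castSucc_injective n hb] at h
    · exact absurd h2 csl
    · exact absurd h2 csl
  · exact fun h => Or.inl ⟨x, y, h, rfl, rfl⟩

lemma gext_adj_last {G : SimpleGraph (Fin n)} {S : Finset (Fin n)} {x : Fin n} :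
    (gext G S).Adj x.castSucc (Fin.last n) ↔ x ∈ S := by
  constructor
  · rintro (⟨a, b, h, ha, hb⟩ | ⟨a, ha, h1, h2⟩ | ⟨a, ha, h1, h2⟩)
    · exact absurd hb csl
    · rwa [← Fin.castSucc_injective n h1]
    · exact absurd h1 csl
  · exact fun h => Or.inr (Or.inl ⟨x, h, rfl, rfl⟩)

lemma comap_gext (G : SimpleGraph (Fin n)) (S : Finset (Fin n)) :
    (gext G S).comap Fin.castSucc = G := by
  ext x y; exact gext_adj_cast

noncomputable def gequiv : SimpleGraph (Fin (n + 1)) ≃ SimpleGraph (Fin n) × Finset (Fin n) where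
  toFun F := (F.comap Fin.castSucc, Finset.univ.filter fun x => F.Adj x.castSucc (Fin.last n))
  invFun p := gext p.1 p.2
  left_inv F := by
    ext a b
    rcases eq_or_ne a (Fin.last n) with rfl | ha
    · rcases eq_or_ne b (Fin.last n) with rfl | hb
      · simp [SimpleGraph.irrefl]
      · obtain ⟨y, rfl⟩ := Fin.exists_castSucc_eq.mpr hb
        rw [(gext _ _).adj_comm, gext_adj_last, F.adj_comm]
        simp
    · obtain ⟨x, rfl⟩ := Fin.exists_castSucc_eq.mpr ha
      rcases eq_or_ne b (Fin.last n) with rfl | hb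
      · rw [gext_adj_last]; simp
      · obtain ⟨y, rfl⟩ := Fin.exists_castSucc_eq.mpr hb
        rw [gext_adj_cast]; simp [SimpleGraph.comap]
  right_inv p := by
    obtain ⟨G, S⟩ := p
    refine Prod.ext (comap_gext G S) ?_
    ext x
    simp [gext_adj_last]

lemma gext_le_iff {G G' : SimpleGraph (Fin n)} {S S' : Finset (Fin n)} :
    gext G S ≤ gext G' S' ↔ G ≤ G' ∧ S ⊆ S' := by
  constructor
  · intro h
    refine ⟨fun x y hxy => ?_, fun x hx => ?_⟩
    · exact gext_adj_cast.1 (h (gext_adj_cast.2 hxy))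
    · exact gext_adj_last.1 (h (gext_adj_last.2 hx))
  · rintro ⟨h1, h2⟩ a b hab
    rcases hab with ⟨x, y, h, rfl, rfl⟩ | ⟨x, hx, rfl, rfl⟩ | ⟨x, hx, rfl, rfl⟩
    · exact Or.inl ⟨x, y, h1 h, rfl, rfl⟩
    · exact Or.inr (Or.inl ⟨x, h2 hx, rfl, rfl⟩)
    · exact Or.inr (Or.inr ⟨x, h2 hx, rfl, rfl⟩)

lemma gext_empty (G : SimpleGraph (Fin n)) : gext G ∅ = G.map Fin.castSuccEmb := by
  ext a b
  simp only [SimpleGraph.map_adj, Fin.castSuccEmb, Function.Embedding.coeFn_mk]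
  constructor
  · rintro (⟨x, y, h, rfl, rfl⟩ | ⟨x, hx, -⟩ | ⟨x, hx, -⟩)
    · exact ⟨x, y, h, rfl, rfl⟩
    · simp at hx
    · simp at hx
  · rintro ⟨x, y, h, rfl, rfl⟩
    exact Or.inl ⟨x, y, h, rfl, rfl⟩

private lemma kinj : Function.Injective (fun x : Fin n => s(x.castSucc, Fin.last n)) := by
  intro a b h
  simp only [Sym2.eq, Sym2.rel_iff', Prod.mk.injEq, Prod.swap_prod_mk] at h
  rcases h with ⟨h, -⟩ | ⟨h, -⟩
  · exact Fin.castSucc_injective n h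
  · exact absurd h csl

private lemma img_disj (E : Set (Sym2 (Fin n))) (T : Set (Fin n)) :
    Disjoint (Sym2.map (Fin.castSucc (n := n)) '' E)
      ((fun x : Fin n => s(x.castSucc, Fin.last n)) '' T) := by
  rw [Set.disjoint_left]
  rintro e ⟨e', -, rfl⟩ ⟨x, -, hx⟩
  induction e' using Sym2.ind with
  | _ a b =>
    rw [Sym2.map_pair_eq] at hx
    simp only at hx
    have : Fin.last n ∈ s(Fin.castSucc a, Fin.castSucc b) := by
      rw [← hx]; simp
    rcases Sym2.mem_iff.mp this with h | h
    · exact csl h.symm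
    · exact csl h.symm

lemma edgeSet_gext (G : SimpleGraph (Fin n)) (S : Finset (Fin n)) :
    (gext G S).edgeSet = (Sym2.map Fin.castSucc '' G.edgeSet) ∪
      ((fun x : Fin n => s(x.castSucc, Fin.last n)) '' ↑S) := by
  ext e
  induction e using Sym2.ind with
  | _ a b =>
    simp only [SimpleGraph.mem_edgeSet, Set.mem_union, Set.mem_image, Finset.mem_coe]
    constructor
    · rintro (⟨x, y, h, rfl, rfl⟩ | ⟨x, hx, rfl, rfl⟩ | ⟨x, hx, rfl, rfl⟩)
      · exact Or.inl ⟨s(x, y), h, Sym2.map_pair_eq _ _ _⟩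
      · exact Or.inr ⟨x, hx, rfl⟩
      · exact Or.inr ⟨x, hx, Sym2.eq_swap⟩
    · rintro (⟨e', he', hh⟩ | ⟨x, hx, hh⟩)
      · induction e' using Sym2.ind with
        | _ x y =>
          rw [Sym2.map_pair_eq, Sym2.eq_iff] at hh
          have hxy : G.Adj x y := he'
          rcases hh with ⟨rfl, rfl⟩ | ⟨rfl, rfl⟩
          · exact Or.inl ⟨x, y, hxy, rfl, rfl⟩
          · exact Or.inl ⟨y, x, hxy.symm, rfl, rfl⟩
      · have hh' : s(x.castSucc, Fin.last n) = s(a, b) := hh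
        rw [Sym2.eq_iff] at hh'
        rcases hh' with ⟨rfl, rfl⟩ | ⟨rfl, rfl⟩
        · exact Or.inr (Or.inl ⟨x, hx, rfl, rfl⟩)
        · exact Or.inr (Or.inr ⟨x, hx, rfl, rfl⟩)

lemma card_diff_gext (G G' : SimpleGraph (Fin n)) (S S' : Finset (Fin n)) :
    Nat.card ((gext G' S').edgeSet \ (gext G S).edgeSet : Set (Sym2 (Fin (n + 1))))
      = Nat.card (G'.edgeSet \ G.edgeSet : Set (Sym2 (Fin n))) + (S' \ S).card := by
  classical
  rw [Nat.card_coe_set_eq, Nat.card_coe_set_eq, edgeSet_gext, edgeSet_gext]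
  have hAB := img_disj G.edgeSet (↑S : Set (Fin n))
  have hA'B := img_disj G'.edgeSet (↑S : Set (Fin n))
  have hAB' := img_disj G.edgeSet (↑S' : Set (Fin n))
  set m := Sym2.map (Fin.castSucc (n := n))
  set k := fun x : Fin n => s(x.castSucc, Fin.last n)
  have hset : (m '' G'.edgeSet ∪ k '' ↑S') \ (m '' G.edgeSet ∪ k '' ↑S)
      = (m '' G'.edgeSet \ m '' G.edgeSet) ∪ (k '' ↑S' \ k '' ↑S) := by
    ext e
    simp only [Set.mem_diff, Set.mem_union, not_or]
    constructor
    · rintro ⟨h1 | h1, h2, h3⟩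
      · exact Or.inl ⟨h1, h2⟩
      · exact Or.inr ⟨h1, h3⟩
    · rintro (⟨h1, h2⟩ | ⟨h1, h2⟩)
      · exact ⟨Or.inl h1, h2, (Set.disjoint_left.mp hA'B h1)⟩
      · exact ⟨Or.inr h1, fun h => (Set.disjoint_right.mp hAB' h1) h, h2⟩
  rw [hset]
  have hminj : Function.Injective m := Sym2.map.injective (Fin.castSucc_injective n)
  rw [← Set.image_diff hminj, ← Set.image_diff kinj]
  rw [Set.ncard_union_eq (img_disj _ _ |>.mono (Set.image_mono Set.diff_subset)
        (Set.image_mono Set.diff_subset)) (Set.toFinite _) (Set.toFinite _)]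
  rw [Set.ncard_image_of_injective _ hminj, Set.ncard_image_of_injective _ kinj]
  congr 1
  rw [← Finset.coe_sdiff, Set.ncard_coe_finset]


lemma sum_sub_sign (S' : Finset (Fin n)) :
    (∑ S : Finset (Fin n), if S ⊆ S' then ((-1 : ℝ) ^ ((S' \ S).card)) else 0)
      = if S' = ∅ then 1 else 0 := by
  classical
  rw [← Finset.sum_filter]
  have hfil : Finset.univ.filter (· ⊆ S') = S'.powerset := by
    ext T; simp [Finset.mem_powerset]
  rw [hfil]
  have hbij : (∑ S ∈ S'.powerset, ((-1 : ℝ) ^ ((S' \ S).card)))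
      = ∑ T ∈ S'.powerset, ((-1 : ℝ) ^ (T.card)) := by
    refine Finset.sum_nbij' (fun S => S' \ S) (fun T => S' \ T) ?_ ?_ ?_ ?_ ?_
    · intro a ha; simp
    · intro a ha; simp
    · intro a ha; exact sdiff_sdiff_eq_self (Finset.mem_powerset.mp ha)
    · intro a ha; exact sdiff_sdiff_eq_self (Finset.mem_powerset.mp ha)
    · intro a ha; rfl
  rw [hbij]
  have hz : (∑ T ∈ S'.powerset, ((-1 : ℝ) ^ (T.card)))
      = ((∑ T ∈ S'.powerset, ((-1 : ℤ) ^ (T.card)) : ℤ) : ℝ) := by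
    push_cast; rfl
  rw [hz, Finset.sum_powerset_neg_one_pow_card]
  split <;> simp

end Aux

/-- For an isolate-indifferent graph parameter, summing the Möbius transform over all graphs
on `[n+1]` whose restriction to the first `n` vertices is `F₀` gives the Möbius transform
of `F₀`. -/
theorem mobius_sum_restrict (f : ∀ n, SimpleGraph (Fin n) → ℝ)
    (hii : IsolateIndifferent f) (n : ℕ) (F₀ : SimpleGraph (Fin n)) :
    ∑ F : SimpleGraph (Fin (n + 1)),
      (if SimpleGraph.comap Fin.castSucc F = F₀ then mobiusT f F else 0) = mobiusT f F₀ := by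
  classical
  have hstepA : (∑ F : SimpleGraph (Fin (n + 1)),
      (if SimpleGraph.comap Fin.castSucc F = F₀ then mobiusT f F else 0))
      = ∑ S : Finset (Fin n), mobiusT f (gext F₀ S) := by
    rw [← Equiv.sum_comp (gequiv (n := n)).symm
      (fun F => if SimpleGraph.comap Fin.castSucc F = F₀ then mobiusT f F else 0),
      Fintype.sum_prod_type]
    have hbody : ∀ (G : SimpleGraph (Fin n)) (S : Finset (Fin n)),
        (if SimpleGraph.comap Fin.castSucc ((gequiv (n := n)).symm (G, S)) = F₀
          then mobiusT f ((gequiv (n := n)).symm (G, S)) else 0)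
        = (if G = F₀ then mobiusT f (gext G S) else 0) := by
      intro G S
      have h1 : (gequiv (n := n)).symm (G, S) = gext G S := rfl
      rw [h1, comap_gext]
    simp only [hbody]
    rw [Finset.sum_comm]
    refine Finset.sum_congr rfl fun S _ => ?_
    rw [Finset.sum_ite_eq' Finset.univ F₀ (fun G => mobiusT f (gext G S))]
    simp
  have hmob : ∀ S : Finset (Fin n), mobiusT f (gext F₀ S)
      = ∑ G' : SimpleGraph (Fin n), ∑ S' : Finset (Fin n),
        (if F₀ ≤ G' ∧ S ⊆ S' then
          ((-1 : ℝ) ^ (Nat.card (G'.edgeSet \ F₀.edgeSet : Set (Sym2 (Fin n))))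
            * (-1 : ℝ) ^ ((S' \ S).card)) * f (n + 1) (gext G' S')
        else 0) := by
    intro S
    unfold mobiusT
    rw [← Equiv.sum_comp (gequiv (n := n)).symm
      (fun F' => if gext F₀ S ≤ F' then
        (-1 : ℝ) ^ (Nat.card (F'.edgeSet \ (gext F₀ S).edgeSet : Set (Sym2 (Fin (n + 1)))))
          * f (n + 1) F' else 0),
      Fintype.sum_prod_type]
    refine Finset.sum_congr rfl fun G' _ => Finset.sum_congr rfl fun S' _ => ?_
    have h1 : (gequiv (n := n)).symm (G', S') = gext G' S' := rfl
    rw [h1, card_diff_gext, pow_add]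
    congr 1
    · exact propext gext_le_iff
  rw [hstepA]
  simp only [hmob]
  rw [Finset.sum_comm]
  have hinner : ∀ G' : SimpleGraph (Fin n),
      (∑ S : Finset (Fin n), ∑ S' : Finset (Fin n),
        (if F₀ ≤ G' ∧ S ⊆ S' then
          ((-1 : ℝ) ^ (Nat.card (G'.edgeSet \ F₀.edgeSet : Set (Sym2 (Fin n))))
            * (-1 : ℝ) ^ ((S' \ S).card)) * f (n + 1) (gext G' S')
        else 0))
      = if F₀ ≤ G' then
          (-1 : ℝ) ^ (Nat.card (G'.edgeSet \ F₀.edgeSet : Set (Sym2 (Fin n))))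
            * f (n + 1) (gext G' ∅) else 0 := by
    intro G'
    rw [Finset.sum_comm]
    by_cases hG : F₀ ≤ G'
    · simp only [hG, true_and, if_true]
      have hS' : ∀ S' : Finset (Fin n),
          (∑ S : Finset (Fin n), (if S ⊆ S' then
            ((-1 : ℝ) ^ (Nat.card (G'.edgeSet \ F₀.edgeSet : Set (Sym2 (Fin n))))
              * (-1 : ℝ) ^ ((S' \ S).card)) * f (n + 1) (gext G' S')
          else 0))
          = if S' = ∅ then
              (-1 : ℝ) ^ (Nat.card (G'.edgeSet \ F₀.edgeSet : Set (Sym2 (Fin n))))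
                * f (n + 1) (gext G' S') else 0 := by
        intro S'
        have hfac : ∀ S : Finset (Fin n),
            (if S ⊆ S' then
              ((-1 : ℝ) ^ (Nat.card (G'.edgeSet \ F₀.edgeSet : Set (Sym2 (Fin n))))
                * (-1 : ℝ) ^ ((S' \ S).card)) * f (n + 1) (gext G' S')
            else 0)
            = ((-1 : ℝ) ^ (Nat.card (G'.edgeSet \ F₀.edgeSet : Set (Sym2 (Fin n))))
                * f (n + 1) (gext G' S'))
              * (if S ⊆ S' then (-1 : ℝ) ^ ((S' \ S).card) else 0) := by
          intro S; split <;> ring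
        simp only [hfac]
        rw [← Finset.mul_sum, sum_sub_sign S']
        split <;> ring
      simp only [hS']
      rw [Finset.sum_ite_eq' Finset.univ (∅ : Finset (Fin n))
        (fun S' => (-1 : ℝ) ^ (Nat.card (G'.edgeSet \ F₀.edgeSet : Set (Sym2 (Fin n))))
          * f (n + 1) (gext G' S'))]
      simp
    · simp [hG]
  simp only [hinner]
  unfold mobiusT
  refine Finset.sum_congr rfl fun G' _ => ?_
  split
  · congr 1
    rw [gext_empty, hii.2]
  · rfl
end

section
/- Let f be a graph parameter whose Möbius transform f† is nonnegative, with f isolate-indifferent and normalized. Then defining P(Gₙ = F) = f†(F) for graphs F on [n] gives a probability distribution on graphs with vertex set [n] (i.e., all values are nonnegative and they sum to 1), and f(F) = P(F ⊆ Gₙ) for every graph F on [n]. -/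
open scoped Classical

open Finset SimpleGraph

open Finset SimpleGraph

lemma aux_card {n : ℕ} (A B : Set (Sym2 (Fin n))) [Fintype ↥(A \ B)] :
    Nat.card (A \ B : Set (Sym2 (Fin n))) = (A \ B).toFinset.card := by
  rw [Nat.card_coe_set_eq, Set.ncard_eq_toFinset_card']

lemma graphInnerSum {n : ℕ} (F F'' : SimpleGraph (Fin n)) :
    (∑ F' : SimpleGraph (Fin n), if F ≤ F' ∧ F' ≤ F'' then
      (-1 : ℝ) ^ (Nat.card (F''.edgeSet \ F'.edgeSet : Set (Sym2 (Fin n)))) else 0)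
    = if F = F'' then 1 else 0 := by
  by_cases h : F ≤ F''
  · rw [← Finset.sum_filter]
    set D : Finset (Sym2 (Fin n)) := (F''.edgeSet \ F.edgeSet).toFinset with hD
    have key : ∑ F' ∈ Finset.univ.filter (fun F' => F ≤ F' ∧ F' ≤ F''),
        (-1 : ℝ) ^ (Nat.card (F''.edgeSet \ F'.edgeSet : Set (Sym2 (Fin n))))
        = ∑ t ∈ D.powerset, (-1 : ℝ) ^ t.card := by
      refine Finset.sum_bij' (fun F' _ => (F''.edgeSet \ F'.edgeSet).toFinset)
        (fun t _ => F'' \ SimpleGraph.fromEdgeSet (↑t : Set (Sym2 (Fin n))))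
        ?_ ?_ ?_ ?_ ?_
      · intro F' hF'
        simp only [Finset.mem_filter] at hF'
        rw [Finset.mem_powerset, hD, Set.toFinset_subset_toFinset]
        exact Set.diff_subset_diff_right (edgeSet_mono hF'.2.1)
      · intro t ht
        rw [Finset.mem_powerset, hD] at ht
        have htE : ∀ e ∈ t, e ∈ F''.edgeSet ∧ e ∉ F.edgeSet := by
          intro e he
          have := ht he
          rw [Set.mem_toFinset] at this
          exact this
        simp only [Finset.mem_filter, Finset.mem_univ, true_and]
        constructor
        · rw [← edgeSet_subset_edgeSet, edgeSet_sdiff, edgeSet_fromEdgeSet]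
          intro e he
          rw [Set.mem_diff]
          refine ⟨edgeSet_mono h he, fun hmem => ?_⟩
          rw [Set.mem_diff, Finset.mem_coe] at hmem
          exact (htE e hmem.1).2 he
        · exact sdiff_le
      · intro F' hF'
        simp only [Finset.mem_filter, Finset.mem_univ, true_and] at hF'
        apply SimpleGraph.edgeSet_injective
        rw [edgeSet_sdiff, edgeSet_fromEdgeSet, Set.coe_toFinset]
        ext e
        simp only [Set.mem_diff]
        constructor
        · rintro ⟨he'', hnot⟩
          by_contra he'
          exact hnot ⟨⟨he'', he'⟩, SimpleGraph.not_isDiag_of_mem_edgeSet _ he''⟩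
        · intro he'
          exact ⟨edgeSet_mono hF'.2 he', fun hd => hd.1.2 he'⟩
      · intro t ht
        rw [Finset.mem_powerset, hD] at ht
        have htE : ∀ e ∈ t, e ∈ F''.edgeSet ∧ e ∉ F.edgeSet := by
          intro e he
          have := ht he
          rw [Set.mem_toFinset] at this
          exact this
        apply Finset.coe_injective
        rw [Set.coe_toFinset, edgeSet_sdiff, edgeSet_fromEdgeSet]
        ext e
        simp only [Set.mem_diff, Finset.mem_coe]
        constructor
        · rintro ⟨he'', hn⟩
          by_contra het
          exact hn ⟨he'', fun hc => het hc.1⟩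
        · intro het
          have h1 := (htE e het).1
          exact ⟨h1, fun hc => hc.2 ⟨het, SimpleGraph.not_isDiag_of_mem_edgeSet _ h1⟩⟩
      · intro F' _
        exact congrArg (fun k => (-1:ℝ)^k) (aux_card _ _)
    rw [key]
    have cast1 : (∑ t ∈ D.powerset, (-1 : ℝ) ^ t.card)
        = ((∑ t ∈ D.powerset, (-1 : ℤ) ^ t.card : ℤ) : ℝ) := by
      push_cast; rfl
    rw [cast1, Finset.sum_powerset_neg_one_pow_card]
    have hiff : D = ∅ ↔ F = F'' := by
      rw [hD, Set.toFinset_eq_empty, Set.diff_eq_empty, edgeSet_subset_edgeSet]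
      exact ⟨fun h' => le_antisymm h h', fun h' => h' ▸ le_rfl⟩
    split_ifs with h1 h2 h2
    · norm_num
    · exact absurd (hiff.1 h1) h2
    · exact absurd (hiff.2 h2) h1
    · norm_num
  · rw [if_neg (by rintro rfl; exact h le_rfl)]
    refine Finset.sum_eq_zero fun F' _ => ?_
    rw [if_neg]
    rintro ⟨h1, h2⟩
    exact h (h1.trans h2)


lemma inversion (f : ∀ n, SimpleGraph (Fin n) → ℝ) {n : ℕ} (F : SimpleGraph (Fin n)) :
    ∑ F' : SimpleGraph (Fin n), (if F ≤ F' then mobiusT f F' else 0) = f n F := by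
  have step1 : ∀ F' : SimpleGraph (Fin n), (if F ≤ F' then mobiusT f F' else 0)
      = ∑ F'' : SimpleGraph (Fin n), if F ≤ F' ∧ F' ≤ F'' then
          (-1 : ℝ) ^ (Nat.card (F''.edgeSet \ F'.edgeSet : Set (Sym2 (Fin n)))) * f n F''
        else 0 := by
    intro F'
    by_cases h : F ≤ F'
    · simp [mobiusT, h]
    · simp [h]
  simp only [step1]
  rw [Finset.sum_comm]
  have step2 : ∀ F'' : SimpleGraph (Fin n),
      (∑ F' : SimpleGraph (Fin n), if F ≤ F' ∧ F' ≤ F'' then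
        (-1 : ℝ) ^ (Nat.card (F''.edgeSet \ F'.edgeSet : Set (Sym2 (Fin n)))) * f n F'' else 0)
      = f n F'' * (if F = F'' then 1 else 0) := by
    intro F''
    rw [← graphInnerSum F F'', Finset.mul_sum]
    refine Finset.sum_congr rfl fun F' _ => ?_
    split_ifs with h
    · ring
    · simp
  simp only [step2]
  simp [mul_ite, mul_one, mul_zero, Finset.sum_ite_eq]

lemma f_bot (f : ∀ n, SimpleGraph (Fin n) → ℝ) (hii : IsolateIndifferent f)
    (hnorm : Normalized f) : ∀ n, f n ⊥ = 1
  | 0 => hnorm.1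
  | (n + 1) => by
    have h := hii.2 n ⊥
    have hb : (⊥ : SimpleGraph (Fin n)).map Fin.castSuccEmb = ⊥ := by
      ext a b
      simp only [SimpleGraph.map_adj]
      simp
    rw [hb] at h
    rw [h]
    exact f_bot f hii hnorm n

/-- For an isolate-indifferent, normalized graph parameter with nonnegative Möbius transform,
`P(Gₙ = F) = f†(F)` is a probability distribution on graphs on `[n]` and
`f(F) = P(F ⊆ Gₙ)`. -/
theorem mobius_prob_dist (f : ∀ n, SimpleGraph (Fin n) → ℝ)
    (hii : IsolateIndifferent f) (hnorm : Normalized f)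
    (hmob : ∀ (n : ℕ) (F : SimpleGraph (Fin n)), 0 ≤ mobiusT f F) (n : ℕ) :
    (∀ F : SimpleGraph (Fin n), 0 ≤ mobiusT f F) ∧
    (∑ F : SimpleGraph (Fin n), mobiusT f F = 1) ∧
    (∀ F : SimpleGraph (Fin n),
      f n F = ∑ F' : SimpleGraph (Fin n), if F ≤ F' then mobiusT f F' else 0) := by
  refine ⟨hmob n, ?_, fun F => (inversion f F).symm⟩
  have h := inversion f (⊥ : SimpleGraph (Fin n))
  simp only [bot_le, if_true] at h
  rw [h]
  exact f_bot f hii hnorm n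
end

section
/- Let f be a graph parameter and k ≥ 0. The flat connection matrix M_flat(f,k) (indexed by graphs on [k], with entries f(F₁F₂) where F₁F₂ is the edge-union) is positive semidefinite if and only if f†(F) ≥ 0 for all graphs F on vertex set [k]. -/
open scoped Classical

lemma card_diff_eq {k : ℕ} (A F : SimpleGraph (Fin k)) :
    Nat.card (F.edgeSet \ A.edgeSet : Set (Sym2 (Fin k)))
      = (F.edgeFinset \ A.edgeFinset).card := by
  rw [Nat.card_coe_set_eq, show F.edgeSet \ A.edgeSet = ↑(F.edgeFinset \ A.edgeFinset) by
    simp [Finset.coe_sdiff, SimpleGraph.coe_edgeFinset], Set.ncard_coe_finset]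

lemma sum_interval {k : ℕ} (A B : SimpleGraph (Fin k)) (h : A ≤ B) (g : ℕ → ℝ) :
    (∑ F₁ : SimpleGraph (Fin k),
        if A ≤ F₁ ∧ F₁ ≤ B then g ((F₁.edgeFinset \ A.edgeFinset).card) else 0)
      = ∑ s ∈ (B.edgeFinset \ A.edgeFinset).powerset, g s.card := by
  rw [← Finset.sum_filter]
  refine Finset.sum_bij' (fun F₁ _ => F₁.edgeFinset \ A.edgeFinset)
    (fun s _ => A ⊔ SimpleGraph.fromEdgeSet ↑s) ?_ ?_ ?_ ?_ ?_
  · intro F₁ hF₁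
    simp only [Finset.mem_filter, Finset.mem_univ, true_and] at hF₁
    rw [Finset.mem_powerset]
    exact Finset.sdiff_subset_sdiff (SimpleGraph.edgeFinset_mono hF₁.2) le_rfl
  · intro s hs
    rw [Finset.mem_powerset] at hs
    simp only [Finset.mem_filter, Finset.mem_univ, true_and]
    refine ⟨le_sup_left, sup_le h ?_⟩
    have hsub : (↑s : Set (Sym2 (Fin k))) ⊆ B.edgeSet := by
      intro e he
      have := hs he
      rw [Finset.mem_sdiff] at this
      exact SimpleGraph.mem_edgeFinset.mp this.1
    calc SimpleGraph.fromEdgeSet (↑s : Set (Sym2 (Fin k)))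
        ≤ SimpleGraph.fromEdgeSet B.edgeSet := SimpleGraph.fromEdgeSet_mono hsub
      _ = B := SimpleGraph.fromEdgeSet_edgeSet B
  · intro F₁ hF₁
    simp only [Finset.mem_filter, Finset.mem_univ, true_and] at hF₁
    rw [← SimpleGraph.edgeSet_inj]
    rw [SimpleGraph.edgeSet_sup, SimpleGraph.edgeSet_fromEdgeSet]
    have hdiag : ((↑(F₁.edgeFinset \ A.edgeFinset) : Set (Sym2 (Fin k))) \ Sym2.diagSet)
        = ↑(F₁.edgeFinset \ A.edgeFinset) := by
      apply sdiff_eq_left.mpr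
      rw [Set.disjoint_left]
      intro e he hd
      have : e ∈ F₁.edgeSet := by
        simp only [Finset.coe_sdiff, SimpleGraph.coe_edgeFinset, Set.mem_diff] at he
        exact he.1
      exact SimpleGraph.not_isDiag_of_mem_edgeSet _ this hd
    rw [hdiag]
    simp only [Finset.coe_sdiff, SimpleGraph.coe_edgeFinset]
    rw [Set.union_diff_self, Set.union_eq_self_of_subset_left
      (SimpleGraph.edgeSet_mono hF₁.1)]
  · intro s hs
    rw [Finset.mem_powerset] at hs
    have hdiag : ((↑s : Set (Sym2 (Fin k))) \ Sym2.diagSet) = ↑s := by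
      apply sdiff_eq_left.mpr
      rw [Set.disjoint_left]
      intro e he hd
      have h1 := hs he
      rw [Finset.mem_sdiff] at h1
      exact SimpleGraph.not_isDiag_of_mem_edgeSet _
        (SimpleGraph.mem_edgeFinset.mp h1.1) hd
    apply Finset.coe_injective
    simp only [Finset.coe_sdiff, SimpleGraph.coe_edgeFinset, SimpleGraph.edgeSet_sup,
      SimpleGraph.edgeSet_fromEdgeSet, hdiag, Set.union_diff_left]
    apply sdiff_eq_left.mpr
    rw [Set.disjoint_left]
    intro e he hA
    have := hs he
    rw [Finset.mem_sdiff] at this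
    exact this.2 (SimpleGraph.mem_edgeFinset.mpr hA)
  · intro F₁ hF₁
    rfl

lemma powerset_neg_one_sum {α : Type*} (t : Finset α) :
    (∑ s ∈ t.powerset, (-1 : ℝ) ^ s.card) = if t = ∅ then 1 else 0 := by
  have h := Finset.sum_powerset_neg_one_pow_card (α := α) (x := t)
  have h2 : ((∑ m ∈ t.powerset, (-1 : ℤ) ^ m.card : ℤ) : ℝ)
      = ∑ s ∈ t.powerset, (-1 : ℝ) ^ s.card := by push_cast; rfl
  rw [← h2, h]
  split <;> norm_num

/-- Interval sum, sign measured from the bottom. -/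
lemma interval_sum₁ {k : ℕ} (A B : SimpleGraph (Fin k)) :
    (∑ F₁ : SimpleGraph (Fin k),
        if A ≤ F₁ ∧ F₁ ≤ B then (-1 : ℝ) ^ ((F₁.edgeFinset \ A.edgeFinset).card) else 0)
      = if B = A then 1 else 0 := by
  by_cases h : A ≤ B
  · rw [sum_interval A B h (fun d => (-1 : ℝ) ^ d), powerset_neg_one_sum]
    by_cases hBA : B = A
    · subst hBA
      simp
    · rw [if_neg (fun he => hBA (le_antisymm
        (SimpleGraph.edgeFinset_subset_edgeFinset.mp
          (Finset.sdiff_eq_empty_iff_subset.mp he)) h)), if_neg hBA]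
  · rw [if_neg (fun hBA => h (le_of_eq hBA.symm))]
    apply Finset.sum_eq_zero
    intro F₁ _
    rw [if_neg]
    rintro ⟨h1, h2⟩
    exact h (h1.trans h2)

/-- Interval sum, sign measured from the top. -/
lemma interval_sum₂ {k : ℕ} (A B : SimpleGraph (Fin k)) :
    (∑ F₁ : SimpleGraph (Fin k),
        if A ≤ F₁ ∧ F₁ ≤ B then (-1 : ℝ) ^ ((B.edgeFinset \ F₁.edgeFinset).card) else 0)
      = if B = A then 1 else 0 := by
  have key : ∀ F₁ : SimpleGraph (Fin k),
      (if A ≤ F₁ ∧ F₁ ≤ B then (-1 : ℝ) ^ ((B.edgeFinset \ F₁.edgeFinset).card) else 0)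
        = (-1 : ℝ) ^ ((B.edgeFinset \ A.edgeFinset).card) *
          (if A ≤ F₁ ∧ F₁ ≤ B then (-1 : ℝ) ^ ((F₁.edgeFinset \ A.edgeFinset).card) else 0) := by
    intro F₁
    by_cases hF : A ≤ F₁ ∧ F₁ ≤ B
    · rw [if_pos hF, if_pos hF]
      have hc1 : A.edgeFinset.card ≤ F₁.edgeFinset.card :=
        Finset.card_le_card (SimpleGraph.edgeFinset_mono hF.1)
      have hc2 : F₁.edgeFinset.card ≤ B.edgeFinset.card :=
        Finset.card_le_card (SimpleGraph.edgeFinset_mono hF.2)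
      have h1 : (B.edgeFinset \ A.edgeFinset).card
          = (B.edgeFinset \ F₁.edgeFinset).card + (F₁.edgeFinset \ A.edgeFinset).card := by
        rw [Finset.card_sdiff_of_subset (SimpleGraph.edgeFinset_mono hF.2),
          Finset.card_sdiff_of_subset (SimpleGraph.edgeFinset_mono hF.1),
          Finset.card_sdiff_of_subset (SimpleGraph.edgeFinset_mono (hF.1.trans hF.2))]
        omega
      rw [h1, pow_add, mul_assoc, ← pow_add, Even.neg_one_pow ⟨_, rfl⟩, mul_one]
    · rw [if_neg hF, if_neg hF, mul_zero]
  rw [Finset.sum_congr rfl (fun F₁ _ => key F₁), ← Finset.mul_sum, interval_sum₁ A B]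
  by_cases hBA : B = A
  · subst hBA
    simp
  · simp [hBA]

/-- Möbius inversion. -/
lemma mobius_inv (f : ∀ n, SimpleGraph (Fin n) → ℝ) {k : ℕ} (G : SimpleGraph (Fin k)) :
    (∑ F' : SimpleGraph (Fin k), if G ≤ F' then mobiusT f F' else 0) = f k G := by
  unfold mobiusT
  have step : ∀ F' : SimpleGraph (Fin k),
      (if G ≤ F' then
          ∑ F'' : SimpleGraph (Fin k),
            if F' ≤ F'' then
              (-1 : ℝ) ^ (Nat.card (F''.edgeSet \ F'.edgeSet : Set (Sym2 (Fin k)))) * f k F''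
            else 0
        else 0)
      = ∑ F'' : SimpleGraph (Fin k),
          (if G ≤ F' ∧ F' ≤ F'' then
            (-1 : ℝ) ^ ((F''.edgeFinset \ F'.edgeFinset).card) else 0) * f k F'' := by
    intro F'
    by_cases hG : G ≤ F'
    · rw [if_pos hG]
      refine Finset.sum_congr rfl fun F'' _ => ?_
      by_cases hF : F' ≤ F''
      · rw [if_pos hF, if_pos ⟨hG, hF⟩, card_diff_eq]
      · rw [if_neg hF, if_neg (fun hc => hF hc.2), zero_mul]
    · rw [if_neg hG]
      symm
      apply Finset.sum_eq_zero
      intro F'' _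
      rw [if_neg (fun hc => hG hc.1), zero_mul]
  rw [Finset.sum_congr rfl (fun F' _ => step F'), Finset.sum_comm]
  have step2 : ∀ F'' : SimpleGraph (Fin k),
      (∑ F' : SimpleGraph (Fin k),
          (if G ≤ F' ∧ F' ≤ F'' then
            (-1 : ℝ) ^ ((F''.edgeFinset \ F'.edgeFinset).card) else 0) * f k F'')
      = (if F'' = G then 1 else 0) * f k F'' := by
    intro F''
    rw [← Finset.sum_mul, interval_sum₂ G F'']
  rw [Finset.sum_congr rfl (fun F'' _ => step2 F'')]
  simp

/-- The quadratic form of the flat connection matrix. -/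
lemma quadform (f : ∀ n, SimpleGraph (Fin n) → ℝ) (k : ℕ) (v : SimpleGraph (Fin k) → ℝ) :
    dotProduct v ((Matrix.of fun F₁ F₂ : SimpleGraph (Fin k) => f k (F₁ ⊔ F₂)).mulVec v)
      = ∑ F : SimpleGraph (Fin k),
          mobiusT f F * (∑ F₁ : SimpleGraph (Fin k), if F₁ ≤ F then v F₁ else 0) ^ 2 := by
  have expand : ∀ F₁ F₂ : SimpleGraph (Fin k),
      f k (F₁ ⊔ F₂) = ∑ F : SimpleGraph (Fin k),
        (if F₁ ≤ F then 1 else 0) * (if F₂ ≤ F then 1 else 0) * mobiusT f F := by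
    intro F₁ F₂
    rw [← mobius_inv f (F₁ ⊔ F₂)]
    refine Finset.sum_congr rfl fun F _ => ?_
    by_cases hle : F₁ ⊔ F₂ ≤ F
    · rw [if_pos hle, if_pos (le_sup_left.trans hle), if_pos (le_sup_right.trans hle)]
      ring
    · rw [if_neg hle]
      rcases (not_and_or.mp (fun hc => hle (sup_le hc.1 hc.2))) with hc | hc
      · rw [if_neg hc]; ring
      · rw [if_neg hc]; ring
  calc dotProduct v ((Matrix.of fun F₁ F₂ : SimpleGraph (Fin k) => f k (F₁ ⊔ F₂)).mulVec v)
      = ∑ F₁ : SimpleGraph (Fin k), ∑ F₂ : SimpleGraph (Fin k), ∑ F : SimpleGraph (Fin k),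
          mobiusT f F * ((if F₁ ≤ F then v F₁ else 0) * (if F₂ ≤ F then v F₂ else 0)) := by
        simp only [dotProduct, Matrix.mulVec, Matrix.of_apply]
        refine Finset.sum_congr rfl fun F₁ _ => ?_
        rw [Finset.mul_sum]
        refine Finset.sum_congr rfl fun F₂ _ => ?_
        rw [expand F₁ F₂, Finset.sum_mul, Finset.mul_sum]
        refine Finset.sum_congr rfl fun F _ => ?_
        by_cases h1 : F₁ ≤ F <;> by_cases h2 : F₂ ≤ F <;>
          simp only [h1, h2, if_true, if_false] <;> ring
    _ = ∑ F : SimpleGraph (Fin k), ∑ F₁ : SimpleGraph (Fin k), ∑ F₂ : SimpleGraph (Fin k),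
          mobiusT f F * ((if F₁ ≤ F then v F₁ else 0) * (if F₂ ≤ F then v F₂ else 0)) := by
        rw [Finset.sum_congr rfl fun F₁ _ => Finset.sum_comm (s := Finset.univ)
          (t := Finset.univ) (f := fun F₂ F =>
            mobiusT f F * ((if F₁ ≤ F then v F₁ else 0) * (if F₂ ≤ F then v F₂ else 0)))]
        exact Finset.sum_comm
    _ = ∑ F : SimpleGraph (Fin k),
          mobiusT f F * (∑ F₁ : SimpleGraph (Fin k), if F₁ ≤ F then v F₁ else 0) ^ 2 := by
        refine Finset.sum_congr rfl fun F _ => ?_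
        simp only [← Finset.mul_sum]
        congr 1
        rw [sq, Finset.sum_mul]

/-- The flat connection matrix `M_flat(f,k)`, with entries `f(F₁F₂)` where `F₁F₂` is the
edge-union of graphs on `[k]`, is positive semidefinite iff the Möbius transform `f†` is
nonnegative on all graphs on `[k]`. -/
theorem flat_connection_posSemidef_iff (f : ∀ n, SimpleGraph (Fin n) → ℝ) (k : ℕ) :
    (Matrix.of fun F₁ F₂ : SimpleGraph (Fin k) => f k (F₁ ⊔ F₂)).PosSemidef ↔
      ∀ F : SimpleGraph (Fin k), 0 ≤ mobiusT f F := by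
  constructor
  · intro hM F
    have h0 := hM.dotProduct_mulVec_nonneg (fun F₁ : SimpleGraph (Fin k) =>
      if F ≤ F₁ then (-1 : ℝ) ^ ((F₁.edgeFinset \ F.edgeFinset).card) else 0)
    rw [star_trivial, quadform] at h0
    have hw : ∀ F' : SimpleGraph (Fin k),
        (∑ F₁ : SimpleGraph (Fin k), if F₁ ≤ F' then
            (if F ≤ F₁ then (-1 : ℝ) ^ ((F₁.edgeFinset \ F.edgeFinset).card) else 0) else 0)
          = if F' = F then 1 else 0 := by
      intro F'
      rw [← interval_sum₁ F F']
      refine Finset.sum_congr rfl fun F₁ _ => ?_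
      by_cases h1 : F₁ ≤ F' <;> by_cases h2 : F ≤ F₁ <;> simp [h1, h2]
    rw [Finset.sum_congr rfl (fun F' _ => by rw [hw F'])] at h0
    have hcol : (∑ F' : SimpleGraph (Fin k),
        mobiusT f F' * (if F' = F then (1 : ℝ) else 0) ^ 2) = mobiusT f F := by
      rw [Finset.sum_eq_single F]
      · simp
      · intro F' _ hne
        simp [hne]
      · simp
    rwa [hcol] at h0
  · intro h
    refine Matrix.PosSemidef.of_dotProduct_mulVec_nonneg ?_ ?_
    · ext F₁ F₂
      simp [Matrix.conjTranspose, sup_comm]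
    · intro x
      rw [star_trivial, quadform]
      apply Finset.sum_nonneg
      intro F _
      exact mul_nonneg (h F) (sq_nonneg _)
end

section
/- Let f be an isolate-indifferent normalized graph parameter. Then f has nonnegative Möbius transform if and only if f is flatly reflection positive (i.e., all flat connection matrices M_flat(f,k) are positive semidefinite). -/
open scoped Classical
open Finset

set_option maxHeartbeats 1000000

private lemma mobCard_eq {n : ℕ} (F F' : SimpleGraph (Fin n)) :
    Nat.card (F'.edgeSet \ F.edgeSet : Set (Sym2 (Fin n))) = (F'.edgeFinset \ F.edgeFinset).card := by
  rw [← SimpleGraph.coe_edgeFinset, ← SimpleGraph.coe_edgeFinset, ← Finset.coe_sdiff,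
    Nat.card_coe_set_eq, Set.ncard_coe_finset]

private lemma mobSignSum {n : ℕ} (F G : SimpleGraph (Fin n)) :
    (∑ H : SimpleGraph (Fin n),
      if F ≤ H ∧ H ≤ G then (-1:ℝ) ^ ((H.edgeFinset \ F.edgeFinset).card) else 0)
      = if G = F then 1 else 0 := by
  by_cases hFG : F ≤ G
  · rw [← Finset.sum_filter]
    rw [Finset.sum_nbij' (i := fun H => H.edgeFinset \ F.edgeFinset)
      (j := fun t => F ⊔ SimpleGraph.fromEdgeSet ↑t)
      (t := (G.edgeFinset \ F.edgeFinset).powerset) (g := fun t => (-1:ℝ)^t.card)]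
    · have h1 := @Finset.sum_powerset_neg_one_pow_card (Sym2 (Fin n)) _ (G.edgeFinset \ F.edgeFinset)
      have h2 : (∑ m ∈ (G.edgeFinset \ F.edgeFinset).powerset, ((-1:ℝ)) ^ m.card)
          = ((∑ m ∈ (G.edgeFinset \ F.edgeFinset).powerset, ((-1:ℤ)) ^ m.card) : ℤ) := by
        push_cast; rfl
      rw [h2, h1]
      have h3 : G.edgeFinset \ F.edgeFinset = ∅ ↔ G = F := by
        rw [Finset.sdiff_eq_empty_iff_subset, SimpleGraph.edgeFinset_subset_edgeFinset]
        exact ⟨fun h => le_antisymm h hFG, fun h => le_of_eq h⟩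
      split_ifs with hh1 hh2 hh2 <;> simp_all
    · intro H hH
      simp only [Finset.mem_filter, Finset.mem_univ, true_and] at hH
      simp only [Finset.mem_powerset]
      exact Finset.sdiff_subset_sdiff (SimpleGraph.edgeFinset_mono hH.2) le_rfl
    · intro t ht
      simp only [Finset.mem_powerset] at ht
      simp only [Finset.mem_filter, Finset.mem_univ, true_and]
      refine ⟨le_sup_left, sup_le hFG ?_⟩
      calc SimpleGraph.fromEdgeSet (↑t) ≤ SimpleGraph.fromEdgeSet G.edgeSet := by
              apply SimpleGraph.fromEdgeSet_mono
              intro e he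
              rw [← SimpleGraph.mem_edgeFinset]
              exact (Finset.mem_sdiff.1 (ht (by exact_mod_cast he))).1
        _ = G := SimpleGraph.fromEdgeSet_edgeSet G
    · -- j ∘ i = id
      intro H hH
      simp only [Finset.mem_filter, Finset.mem_univ, true_and] at hH
      rw [← SimpleGraph.edgeSet_inj, SimpleGraph.edgeSet_sup, SimpleGraph.edgeSet_fromEdgeSet]
      ext e
      simp only [Set.mem_union, Set.mem_diff, Finset.coe_sdiff, Set.mem_setOf_eq,
        SimpleGraph.coe_edgeFinset]
      constructor
      · rintro (h | ⟨⟨h, _⟩, _⟩)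
        · exact (SimpleGraph.edgeSet_mono hH.1) h
        · exact h
      · intro h
        by_cases hF : e ∈ F.edgeSet
        · exact Or.inl hF
        · exact Or.inr ⟨⟨h, hF⟩, G.not_isDiag_of_mem_edgeSet ((SimpleGraph.edgeSet_mono hH.2) h)⟩
    · -- i ∘ j = id
      intro t ht
      simp only [Finset.mem_powerset] at ht
      ext e
      simp only [Finset.mem_sdiff, SimpleGraph.mem_edgeFinset, SimpleGraph.edgeSet_sup,
        SimpleGraph.edgeSet_fromEdgeSet, Set.mem_union, Set.mem_diff, Finset.mem_coe,
        Set.mem_setOf_eq]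
      constructor
      · rintro ⟨h | ⟨h, _⟩, hnF⟩
        · exact absurd (SimpleGraph.mem_edgeFinset.2 h) (fun hx => hnF (SimpleGraph.mem_edgeFinset.1 hx))
        · exact h
      · intro h
        have h' := Finset.mem_sdiff.1 (ht h)
        refine ⟨Or.inr ⟨h, ?_⟩, fun hx => h'.2 (SimpleGraph.mem_edgeFinset.2 hx)⟩
        exact G.not_isDiag_of_mem_edgeSet (SimpleGraph.mem_edgeFinset.1 h'.1)
    · intro H hH; rfl
  · rw [Finset.sum_eq_zero, if_neg]
    · intro h; exact hFG (h ▸ le_refl F)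
    · intro H _
      rw [if_neg]; rintro ⟨h1, h2⟩; exact hFG (h1.trans h2)


private lemma mobSignSum' {n : ℕ} (F G : SimpleGraph (Fin n)) :
    (∑ H : SimpleGraph (Fin n),
      if F ≤ H ∧ H ≤ G then (-1:ℝ) ^ ((G.edgeFinset \ H.edgeFinset).card) else 0)
      = if G = F then 1 else 0 := by
  have key : ∀ H : SimpleGraph (Fin n), F ≤ H → H ≤ G →
      (-1:ℝ) ^ ((G.edgeFinset \ H.edgeFinset).card)
        = (-1:ℝ) ^ ((G.edgeFinset \ F.edgeFinset).card)
          * (-1:ℝ) ^ ((H.edgeFinset \ F.edgeFinset).card) := by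
    intro H h1 h2
    have hsub1 : F.edgeFinset ⊆ H.edgeFinset := SimpleGraph.edgeFinset_mono h1
    have hsub2 : H.edgeFinset ⊆ G.edgeFinset := SimpleGraph.edgeFinset_mono h2
    have hdisj : Disjoint (G.edgeFinset \ H.edgeFinset) (H.edgeFinset \ F.edgeFinset) :=
      Finset.disjoint_left.2 fun e he he' =>
        (Finset.mem_sdiff.1 he).2 (Finset.mem_sdiff.1 he').1
    have hunion : (G.edgeFinset \ H.edgeFinset) ∪ (H.edgeFinset \ F.edgeFinset)
        = G.edgeFinset \ F.edgeFinset := Finset.sdiff_union_sdiff_cancel hsub2 hsub1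
    have hcard : (G.edgeFinset \ F.edgeFinset).card
        = (G.edgeFinset \ H.edgeFinset).card + (H.edgeFinset \ F.edgeFinset).card := by
      rw [← hunion, Finset.card_union_of_disjoint hdisj]
    rw [hcard, pow_add, mul_assoc, ← pow_add, ← two_mul, pow_mul, neg_one_sq, one_pow, mul_one]
  have : (∑ H : SimpleGraph (Fin n),
      if F ≤ H ∧ H ≤ G then (-1:ℝ) ^ ((G.edgeFinset \ H.edgeFinset).card) else 0)
      = (-1:ℝ) ^ ((G.edgeFinset \ F.edgeFinset).card)
        * ∑ H : SimpleGraph (Fin n),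
            if F ≤ H ∧ H ≤ G then (-1:ℝ) ^ ((H.edgeFinset \ F.edgeFinset).card) else 0 := by
    rw [Finset.mul_sum]
    refine Finset.sum_congr rfl fun H _ => ?_
    split_ifs with h
    · exact key H h.1 h.2
    · rw [mul_zero]
  rw [this, mobSignSum]
  split_ifs with h
  · subst h; simp
  · rw [mul_zero]

private lemma mobInversion {n : ℕ} (f : ∀ n, SimpleGraph (Fin n) → ℝ) (F : SimpleGraph (Fin n)) :
    (∑ G : SimpleGraph (Fin n), if F ≤ G then mobiusT f G else 0) = f n F := by
  have expand : ∀ G : SimpleGraph (Fin n), mobiusT f G =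
      ∑ F' : SimpleGraph (Fin n),
        if G ≤ F' then (-1:ℝ) ^ ((F'.edgeFinset \ G.edgeFinset).card) * f n F' else 0 := by
    intro G; unfold mobiusT
    exact Finset.sum_congr rfl fun F' _ => by rw [mobCard_eq]
  calc (∑ G : SimpleGraph (Fin n), if F ≤ G then mobiusT f G else 0)
      = ∑ G : SimpleGraph (Fin n), ∑ F' : SimpleGraph (Fin n),
          if F ≤ G ∧ G ≤ F' then (-1:ℝ) ^ ((F'.edgeFinset \ G.edgeFinset).card) * f n F' else 0 := by
        refine Finset.sum_congr rfl fun G _ => ?_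
        rw [expand]
        split_ifs with h
        · exact Finset.sum_congr rfl fun F' _ => by
            split_ifs with h1 h2 h2 <;> simp_all
        · rw [Finset.sum_eq_zero]
          intro F' _; rw [if_neg]; rintro ⟨h1, _⟩; exact h h1
    _ = ∑ F' : SimpleGraph (Fin n), ∑ G : SimpleGraph (Fin n),
          if F ≤ G ∧ G ≤ F' then (-1:ℝ) ^ ((F'.edgeFinset \ G.edgeFinset).card) * f n F' else 0 :=
        Finset.sum_comm
    _ = ∑ F' : SimpleGraph (Fin n),
          (∑ G : SimpleGraph (Fin n),
            if F ≤ G ∧ G ≤ F' then (-1:ℝ) ^ ((F'.edgeFinset \ G.edgeFinset).card) else 0) * f n F' := by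
        refine Finset.sum_congr rfl fun F' _ => ?_
        rw [Finset.sum_mul]
        exact Finset.sum_congr rfl fun G _ => by rw [ite_mul, zero_mul]
    _ = ∑ F' : SimpleGraph (Fin n), (if F' = F then 1 else 0) * f n F' := by
        refine Finset.sum_congr rfl fun F' _ => ?_
        rw [mobSignSum']
    _ = f n F := by simp [Finset.sum_ite_eq]


private lemma mobQuadForm {k : ℕ} (f : ∀ n, SimpleGraph (Fin n) → ℝ)
    (x : SimpleGraph (Fin k) → ℝ) :
    (∑ F₁ : SimpleGraph (Fin k), ∑ F₂ : SimpleGraph (Fin k), x F₁ * (f k (F₁ ⊔ F₂) * x F₂))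
      = ∑ G : SimpleGraph (Fin k),
          mobiusT f G * (∑ F : SimpleGraph (Fin k), if F ≤ G then x F else 0) ^ 2 := by
  have step : ∀ F₁ F₂ : SimpleGraph (Fin k),
      x F₁ * (f k (F₁ ⊔ F₂) * x F₂)
        = ∑ G : SimpleGraph (Fin k),
            mobiusT f G * ((if F₁ ≤ G then x F₁ else 0) * (if F₂ ≤ G then x F₂ else 0)) := by
    intro F₁ F₂
    rw [← mobInversion f (F₁ ⊔ F₂), Finset.sum_mul, Finset.mul_sum]
    refine Finset.sum_congr rfl fun G _ => ?_
    by_cases h : F₁ ⊔ F₂ ≤ G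
    · rw [if_pos h, if_pos (le_trans le_sup_left h), if_pos (le_trans le_sup_right h)]
      ring
    · rw [if_neg h]
      rcases (not_and_or.1 (fun hc : F₁ ≤ G ∧ F₂ ≤ G => h (sup_le hc.1 hc.2))) with h1 | h1
      · rw [if_neg h1]; ring
      · rw [if_neg h1]; ring
  calc (∑ F₁ : SimpleGraph (Fin k), ∑ F₂ : SimpleGraph (Fin k), x F₁ * (f k (F₁ ⊔ F₂) * x F₂))
      = ∑ F₁ : SimpleGraph (Fin k), ∑ F₂ : SimpleGraph (Fin k), ∑ G : SimpleGraph (Fin k),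
          mobiusT f G * ((if F₁ ≤ G then x F₁ else 0) * (if F₂ ≤ G then x F₂ else 0)) :=
        Finset.sum_congr rfl fun F₁ _ => Finset.sum_congr rfl fun F₂ _ => step F₁ F₂
    _ = ∑ F₁ : SimpleGraph (Fin k), ∑ G : SimpleGraph (Fin k), ∑ F₂ : SimpleGraph (Fin k),
          mobiusT f G * ((if F₁ ≤ G then x F₁ else 0) * (if F₂ ≤ G then x F₂ else 0)) :=
        Finset.sum_congr rfl fun F₁ _ => Finset.sum_comm
    _ = ∑ G : SimpleGraph (Fin k), ∑ F₁ : SimpleGraph (Fin k), ∑ F₂ : SimpleGraph (Fin k),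
          mobiusT f G * ((if F₁ ≤ G then x F₁ else 0) * (if F₂ ≤ G then x F₂ else 0)) :=
        Finset.sum_comm
    _ = ∑ G : SimpleGraph (Fin k),
          mobiusT f G * (∑ F : SimpleGraph (Fin k), if F ≤ G then x F else 0) ^ 2 := by
        refine Finset.sum_congr rfl fun G _ => ?_
        rw [sq, Finset.sum_mul_sum, Finset.mul_sum]
        refine Finset.sum_congr rfl fun F₁ _ => ?_
        rw [Finset.mul_sum]

private lemma mobDot {k : ℕ} (f : ∀ n, SimpleGraph (Fin n) → ℝ) (x : SimpleGraph (Fin k) → ℝ) :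
    dotProduct (star x)
        ((Matrix.of fun F₁ F₂ : SimpleGraph (Fin k) => f k (F₁ ⊔ F₂)).mulVec x)
      = ∑ G : SimpleGraph (Fin k),
          mobiusT f G * (∑ F : SimpleGraph (Fin k), if F ≤ G then x F else 0) ^ 2 := by
  rw [← mobQuadForm f x]
  simp only [dotProduct, Matrix.mulVec, Matrix.of_apply, Pi.star_apply, star_trivial]
  exact Finset.sum_congr rfl fun F₁ _ => by rw [Finset.mul_sum]

/-- An isolate-indifferent, normalized graph parameter has nonnegative Möbius transform
iff it is flatly reflection positive, i.e. all flat connection matrices are positive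
semidefinite. -/
theorem mobius_nonneg_iff_flatly_reflection_positive
    (f : ∀ n, SimpleGraph (Fin n) → ℝ)
    (hii : IsolateIndifferent f) (hnorm : Normalized f) :
    (∀ (n : ℕ) (F : SimpleGraph (Fin n)), 0 ≤ mobiusT f F) ↔
    (∀ k : ℕ, (Matrix.of fun F₁ F₂ : SimpleGraph (Fin k) => f k (F₁ ⊔ F₂)).PosSemidef) := by
  constructor
  · intro h k
    refine Matrix.PosSemidef.of_dotProduct_mulVec_nonneg ?_ ?_
    · ext F₁ F₂
      simp only [Matrix.conjTranspose_apply, Matrix.of_apply, star_trivial]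
      rw [sup_comm]
    · intro x
      rw [mobDot]
      exact Finset.sum_nonneg fun G _ => mul_nonneg (h k G) (sq_nonneg _)
  · intro h n F
    set x : SimpleGraph (Fin n) → ℝ :=
      fun H => if F ≤ H then (-1:ℝ) ^ ((H.edgeFinset \ F.edgeFinset).card) else 0 with hx
    have h0 := (h n).dotProduct_mulVec_nonneg x
    rw [mobDot] at h0
    have hinner : ∀ G : SimpleGraph (Fin n),
        (∑ H : SimpleGraph (Fin n), if H ≤ G then x H else 0) = if G = F then 1 else 0 := by
      intro G
      rw [← mobSignSum F G]
      refine Finset.sum_congr rfl fun H _ => ?_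
      rw [hx]
      split_ifs with h1 h2 h2 <;> simp_all
    have hsum : (∑ G : SimpleGraph (Fin n),
        mobiusT f G * (∑ H : SimpleGraph (Fin n), if H ≤ G then x H else 0) ^ 2)
        = mobiusT f F := by
      rw [Finset.sum_congr rfl fun G _ => by rw [hinner G]]
      have key : ∀ G : SimpleGraph (Fin n),
          mobiusT f G * ((if G = F then (1:ℝ) else 0)) ^ 2 = if G = F then mobiusT f G else 0 := by
        intro G; split_ifs <;> simp
      rw [Finset.sum_congr rfl fun G _ => key G, Finset.sum_ite_eq' Finset.univ F]
      simp
    rw [hsum] at h0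
    exact h0
end
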